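/- Let m ≥ 1, let p ∈ ℝ^m be a probability mass function on {1,...,m}, and let θ_1 < θ_2 < ... < θ_m be distinct real numbers. Then for every ε > 0 there exists a one-hidden-layer ReLU network v : ℝ → ℝ (i.e., there exist H ∈ ℕ and parameters c, w, b ∈ ℝ^H, d ∈ ℝ with v(θ) = d + Σ_{k=1}^H c_k · max(0, w_k θ + b_k)) such that the vector g ∈ ℝ^m defined by g_j = exp(v(θ_j)) / Σ_{k=1}^m exp(v(θ_k)) satisfies max_{1 ≤ j ≤ m} |g_j − p_j| < ε. -/

import Mathlib

open Finset

/-- `v : ℝ → ℝ` is a one-hidden-layer ReLU network: there exist `H ∈ ℕ` and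
parameters `c, w, b ∈ ℝ^H`, `d ∈ ℝ` with `v θ = d + ∑ k, c k * max 0 (w k * θ + b k)`. -/
def IsOneHiddenLayerReLUNet (v : ℝ → ℝ) : Prop :=
  ∃ (H : ℕ) (c w b : Fin H → ℝ) (d : ℝ),
    ∀ t : ℝ, v t = d + ∑ k, c k * max 0 (w k * t + b k)

lemma relu_net_const (d : ℝ) : IsOneHiddenLayerReLUNet (fun _ => d) :=
  ⟨0, Fin.elim0, Fin.elim0, Fin.elim0, d, fun t => by simp⟩

lemma relu_net_add_unit {v : ℝ → ℝ} (hv : IsOneHiddenLayerReLUNet v) (c w b : ℝ) :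
    IsOneHiddenLayerReLUNet (fun t => v t + c * max 0 (w * t + b)) := by
  obtain ⟨H, cs, ws, bs, d, hd⟩ := hv
  refine ⟨H + 1, Fin.snoc cs c, Fin.snoc ws w, Fin.snoc bs b, d, fun t => ?_⟩
  rw [Fin.sum_univ_castSucc]
  simp [hd t, add_assoc]

lemma relu_interp : ∀ (m : ℕ) (θ : Fin m → ℝ), StrictMono θ → ∀ y : Fin m → ℝ,
    ∃ v : ℝ → ℝ, IsOneHiddenLayerReLUNet v ∧ ∀ j, v (θ j) = y j := by
  intro m
  induction m with
  | zero => exact fun θ _ y => ⟨fun _ => 0, relu_net_const 0, fun j => j.elim0⟩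
  | succ n ih =>
    intro θ hθ y
    cases n with
    | zero =>
      refine ⟨fun _ => y 0, relu_net_const (y 0), fun j => ?_⟩
      fin_cases j; rfl
    | succ n' =>
      obtain ⟨v, hv, hvθ⟩ := ih (θ ∘ Fin.castSucc)
        (hθ.comp fun i j h => Fin.castSucc_lt_castSucc_iff.mpr h) (y ∘ Fin.castSucc)
      set a : ℝ := θ (Fin.castSucc (Fin.last n')) with ha
      have hlast : a < θ (Fin.last (n' + 1)) := hθ (Fin.castSucc_lt_last _)
      set c : ℝ := (y (Fin.last (n' + 1)) - v (θ (Fin.last (n' + 1)))) /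
        (θ (Fin.last (n' + 1)) - a) with hc
      refine ⟨fun t => v t + c * max 0 (1 * t + (-a)), relu_net_add_unit hv c 1 (-a), ?_⟩
      intro j
      induction j using Fin.lastCases with
      | last =>
        have hpos : (0 : ℝ) < θ (Fin.last (n' + 1)) - a := by linarith
        have : max 0 (1 * θ (Fin.last (n' + 1)) + -a) = θ (Fin.last (n' + 1)) - a := by
          rw [max_eq_right] <;> linarith
        dsimp only
        rw [this, hc]
        field_simp
        ring
      | cast i =>
        have hle : θ (Fin.castSucc i) ≤ a := hθ.monotone (Fin.castSucc_le_castSucc_iff.mpr (Fin.le_last i))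
        have : max 0 (1 * θ (Fin.castSucc i) + -a) = 0 := by
          rw [max_eq_left] ; linarith
        dsimp only
        rw [this, mul_zero, add_zero]
        exact hvθ i

theorem softmax_relu_net_approximates_pmf
    (m : ℕ) (hm : 1 ≤ m) (p : Fin m → ℝ)
    (hp0 : ∀ j, 0 ≤ p j) (hp1 : ∑ j, p j = 1)
    (θ : Fin m → ℝ) (hθ : StrictMono θ)
    (ε : ℝ) (hε : 0 < ε) :
    ∃ v : ℝ → ℝ, IsOneHiddenLayerReLUNet v ∧
      ∀ j : Fin m,
        |Real.exp (v (θ j)) / (∑ k : Fin m, Real.exp (v (θ k))) - p j| < ε := by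
  set δ : ℝ := ε / (2 * (m + 1)) with hδdef
  have hmpos : (0 : ℝ) < m + 1 := by positivity
  have hδ : 0 < δ := by positivity
  obtain ⟨v, hv, hvθ⟩ := relu_interp m θ hθ (fun j => Real.log (p j + δ))
  refine ⟨v, hv, fun j => ?_⟩
  have hexp : ∀ j : Fin m, Real.exp (v (θ j)) = p j + δ := by
    intro j
    rw [hvθ j, Real.exp_log (by have := hp0 j; linarith)]
  have hsum : (∑ k : Fin m, Real.exp (v (θ k))) = 1 + m * δ := by
    simp only [hexp]
    rw [Finset.sum_add_distrib, hp1, Finset.sum_const, Finset.card_univ, Fintype.card_fin,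
      nsmul_eq_mul]
  rw [hexp j, hsum]
  have hS : (0 : ℝ) < 1 + m * δ := by positivity
  have hpj1 : p j ≤ 1 := by
    rw [← hp1]
    exact Finset.single_le_sum (fun i _ => hp0 i) (Finset.mem_univ j)
  have key : (p j + δ) / (1 + m * δ) - p j = δ * (1 - m * p j) / (1 + m * δ) := by
    field_simp
    ring
  rw [key, abs_div, abs_of_pos hS]
  have h1 : |δ * (1 - m * p j)| ≤ δ * (m + 1) := by
    rw [abs_mul, abs_of_pos hδ]
    have : |1 - (m : ℝ) * p j| ≤ m + 1 := by
      rw [abs_le]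
      constructor
      · nlinarith [hp0 j, Nat.cast_nonneg (α := ℝ) m]
      · nlinarith [hp0 j, Nat.cast_nonneg (α := ℝ) m]
    nlinarith
  have h2 : |δ * (1 - m * p j)| / (1 + m * δ) ≤ δ * (m + 1) := by
    calc |δ * (1 - m * p j)| / (1 + m * δ) ≤ |δ * (1 - m * p j)| / 1 := by
          apply div_le_div_of_nonneg_left (abs_nonneg _) one_pos
          nlinarith [Nat.cast_nonneg (α := ℝ) m]
      _ = |δ * (1 - m * p j)| := div_one _
      _ ≤ δ * (m + 1) := h1
  have h3 : δ * (m + 1) = ε / 2 := by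
    rw [hδdef]; field_simp
  linarith
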